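/- For every integer k ≥ 1, the number 2(k+1) divides Euler's totient φ(8(k+1)) if and only if k+1 = 2^x for some integer x ≥ 1 (equivalently, k = 2^x − 1). -/

import Mathlib

/-- For every integer `k ≥ 1`, `2(k+1)` divides `φ(8(k+1))` if and only if
`k + 1 = 2^x` for some `x ≥ 1` (equivalently `k = 2^x - 1`). -/
theorem totient_divisibility_iff_pow_two
    (k : ℕ) (hk : 1 ≤ k) :
    (2 * (k + 1)) ∣ Nat.totient (8 * (k + 1)) ↔ ∃ x : ℕ, 1 ≤ x ∧ k + 1 = 2 ^ x := by
  constructor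
  · intro h
    set n := k + 1 with hn
    have hn0 : n ≠ 0 := by omega
    set a := n.factorization 2 with ha
    set m := n / 2 ^ a with hmdef
    have hdecomp : 2 ^ a * m = n := Nat.ordProj_mul_ordCompl_eq_self n 2
    have hm2 : ¬ 2 ∣ m := Nat.not_dvd_ordCompl Nat.prime_two hn0
    have hm0 : m ≠ 0 := by
      intro h0
      rw [h0, mul_zero] at hdecomp
      exact hn0 hdecomp.symm
    have hcop : Nat.Coprime 2 m := (Nat.prime_two.coprime_iff_not_dvd).mpr hm2
    have h8 : 8 * n = 2 ^ (a + 3) * m := by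
      rw [← hdecomp]; ring
    have htot : Nat.totient (8 * n) = 2 ^ (a + 2) * Nat.totient m := by
      rw [h8, Nat.totient_mul (hcop.pow_left _),
        Nat.totient_prime_pow Nat.prime_two (by omega : 0 < a + 3)]
      simp
    rw [htot] at h
    have h' : 2 ^ (a + 1) * m ∣ 2 ^ (a + 1) * (2 * Nat.totient m) := by
      calc 2 ^ (a + 1) * m = 2 * n := by rw [← hdecomp]; ring
        _ ∣ 2 ^ (a + 2) * Nat.totient m := h
        _ = 2 ^ (a + 1) * (2 * Nat.totient m) := by ring
    have hmd : m ∣ 2 * Nat.totient m :=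
      (Nat.mul_dvd_mul_iff_left (by positivity : 0 < 2 ^ (a + 1))).mp h'
    have hmd' : m ∣ Nat.totient m := hcop.symm.dvd_of_dvd_mul_left hmd
    have hm1 : m = 1 := by
      by_contra hm1
      have hm2' : 2 ≤ m := (Nat.two_le_iff m).mpr ⟨hm0, hm1⟩
      have hlt : Nat.totient m < m := Nat.totient_lt m hm2'
      have hpos : 0 < Nat.totient m := Nat.totient_pos.mpr (by omega)
      have := Nat.le_of_dvd hpos hmd'
      omega
    have hna : n = 2 ^ a := by rw [← hdecomp, hm1, mul_one]
    refine ⟨a, ?_, hna⟩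
    by_contra ha0
    have : a = 0 := by omega
    rw [this] at hna
    simp at hna
    omega
  · rintro ⟨x, hx, hkx⟩
    rw [hkx]
    have h8 : 8 * 2 ^ x = 2 ^ (x + 3) := by ring
    rw [h8, Nat.totient_prime_pow Nat.prime_two (by omega : 0 < x + 3)]
    refine ⟨2, ?_⟩
    have : x + 3 - 1 = x + 2 := by omega
    rw [this]
    ring
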